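/- For γ ≤ D*, the Phase-I stopping event of the two-phase hypothesis test has exponentially small probability with exponent γ under both hypotheses: for every δ > 0 there is N(δ) such that for all n ≥ N(δ) and for i = 1,2, P_i( β1 < (1/n)·Σ_{j=1}^n log(P1(X_j)/P2(X_j)) < α1 ) ≤ e^{−(γ−δ)n}, where the X_j are i.i.d. with law P_i under hypothesis H_i; consequently the stopping time τ of the two-phase test satisfies P_i(τ > n) ≤ e^{−(γ−δ)n}. -/

import Mathlib

open Real Finset
open scoped Classical

noncomputable section

variable {X : Type} [Fintype X]

/-- `p` is a probability mass function on the finite alphabet `X`. -/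
def IsPMF (p : X → ℝ) : Prop := (∀ x, 0 ≤ p x) ∧ ∑ x, p x = 1

/-- Kullback–Leibler divergence (natural logarithms) between distributions on a finite
alphabet, with the convention `0 · log(0/·) = 0`. -/
def klDiv (p q : X → ℝ) : ℝ := ∑ x, p x * Real.log (p x / q x)

/-- The `λ`-tilted distribution between `P1` and `P2`. -/
def tilted (P1 P2 : X → ℝ) (lam : ℝ) (x : X) : ℝ :=
  P1 x ^ (1 - lam) * P2 x ^ lam / ∑ a, P1 a ^ (1 - lam) * P2 a ^ lam

/-- The fixed-length error-exponent region
`R_FL = {(E1,E2) : ∃ λ ∈ [0,1], E1 ≤ D(P^(λ)‖P1) ∧ E2 ≤ D(P^(λ)‖P2)}`. -/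
def RFL (P1 P2 : X → ℝ) : Set (ℝ × ℝ) :=
  { E | ∃ lam ∈ Set.Icc (0:ℝ) 1,
      E.1 ≤ klDiv (tilted P1 P2 lam) P1 ∧ E.2 ≤ klDiv (tilted P1 P2 lam) P2 }

/-- `E1(γ) = max { D(P^(λ)‖P1) : λ ∈ [0,1], D(P^(λ)‖P2) ≥ γ }`. -/
def E1exp (P1 P2 : X → ℝ) (γ : ℝ) : ℝ :=
  sSup { e | ∃ lam ∈ Set.Icc (0:ℝ) 1,
      γ ≤ klDiv (tilted P1 P2 lam) P2 ∧ e = klDiv (tilted P1 P2 lam) P1 }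

/-- `E2(γ) = max { D(P^(λ)‖P2) : λ ∈ [0,1], D(P^(λ)‖P1) ≥ γ }`. -/
def E2exp (P1 P2 : X → ℝ) (γ : ℝ) : ℝ :=
  sSup { e | ∃ lam ∈ Set.Icc (0:ℝ) 1,
      γ ≤ klDiv (tilted P1 P2 lam) P1 ∧ e = klDiv (tilted P1 P2 lam) P2 }

/-- `R_γ = R_FL ∪ ([0,E1(γ)] × [0,E2(γ)])`. -/
def Rgamma (P1 P2 : X → ℝ) (γ : ℝ) : Set (ℝ × ℝ) :=
  RFL P1 P2 ∪ (Set.Icc 0 (E1exp P1 P2 γ) ×ˢ Set.Icc 0 (E2exp P1 P2 γ))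

/-- `K·S = {K·x : x ∈ S}` for `S ⊆ ℝ²`. -/
def scaleSet (K : ℕ) (S : Set (ℝ × ℝ)) : Set (ℝ × ℝ) :=
  (fun p : ℝ × ℝ => ((K : ℝ) * p.1, (K : ℝ) * p.2)) '' S

/-- Probability of the i.i.d. sample sequence `x` under the distribution `P`. -/
def prodProb (P : X → ℝ) {N : ℕ} (x : Fin N → X) : ℝ := ∏ i, P (x i)

/-- The first `n` samples, as a list. -/
def histX {N : ℕ} (x : Fin N → X) (n : ℕ) : List X := (List.ofFn x).take n

/-- A sequential binary hypothesis test whose stopping time is almost surely bounded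
by `N`: a stopping time `τ` with respect to the filtration `σ(X_1,…,X_n)` together with
a decision (`accept1 = true` means "choose `H1`") taken at the stopping time; the
decision regions are `A1^τ = {accept1}` and `A2^τ = {¬ accept1}`. -/
structure SeqTest (X : Type) [Fintype X] (N : ℕ) where
  τ : (Fin N → X) → ℕ
  τ_le : ∀ x, τ x ≤ N
  τ_stopping : ∀ x x', histX x' (τ x) = histX x (τ x) → τ x' = τ x
  accept1 : List X → Bool

/-- Type-I error probability `P1(A2^τ)`. -/
def errProb1 (P1 : X → ℝ) {N : ℕ} (T : SeqTest X N) : ℝ :=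
  ∑ x : Fin N → X, prodProb P1 x *
    (if T.accept1 (histX x (T.τ x)) = false then 1 else 0)

/-- Type-II error probability `P2(A1^τ)`. -/
def errProb2 (P2 : X → ℝ) {N : ℕ} (T : SeqTest X N) : ℝ :=
  ∑ x : Fin N → X, prodProb P2 x *
    (if T.accept1 (histX x (T.τ x)) = true then 1 else 0)

/-- Probability `P(τ > n)` under sampling distribution `P`. -/
def lateProbHT (P : X → ℝ) {N : ℕ} (T : SeqTest X N) (n : ℕ) : ℝ :=
  ∑ x : Fin N → X, prodProb P x * (if n < T.τ x then 1 else 0)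

/-- `(E1,E2)` is achievable in a `(γ,K)`-almost-fixed-length manner: for every `δ > 0`
and all large `n` there is a test with `P_i(τ > n) ≤ e^{−γn}`, `τ ≤ Kn` a.s. (encoded in
the type of the test), `P1(A2^τ) ≤ e^{−(E1−δ)n}` and `P2(A1^τ) ≤ e^{−(E2−δ)n}`. -/
def AFLAchievable (P1 P2 : X → ℝ) (γ : ℝ) (K : ℕ) (E : ℝ × ℝ) : Prop :=
  ∀ δ > 0, ∃ N0 : ℕ, ∀ n : ℕ, n ≥ N0 → ∃ T : SeqTest X (K * n),
    lateProbHT P1 T n ≤ Real.exp (-(γ * n)) ∧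
    lateProbHT P2 T n ≤ Real.exp (-(γ * n)) ∧
    errProb1 P1 T ≤ Real.exp (-((E.1 - δ) * n)) ∧
    errProb2 P2 T ≤ Real.exp (-((E.2 - δ) * n))

/-- `R_AFL^(γ,K)`: the region of error-exponent pairs achievable in a
`(γ,K)`-almost-fixed-length manner. -/
def RAFL (P1 P2 : X → ℝ) (γ : ℝ) (K : ℕ) : Set (ℝ × ℝ) :=
  { E | AFLAchievable P1 P2 γ K E }

/-- Log-likelihood ratio `Σ_j log(P1(x_j)/P2(x_j))` of an observed sample list. -/
def llr (P1 P2 : X → ℝ) (l : List X) : ℝ :=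
  (l.map fun a => Real.log (P1 a / P2 a)).sum

/-- The two-phase hypothesis test with Phase-I thresholds `α1, β1` and Phase-II
threshold `α`: Phase I collects `n` samples and stops, declaring `H1` if the
log-likelihood ratio is `≥ α1·n` and `H2` if it is `≤ β1·n`; otherwise Phase II
collects `(K−1)n` additional samples and declares `H1` iff the overall log-likelihood
ratio is `≥ α·(Kn)`. -/
def twoPhaseTest (P1 P2 : X → ℝ) (α1 β1 α : ℝ) (K n : ℕ) (hK : 1 ≤ K) :
    SeqTest X (K * n) where
  τ := fun x =>
    if α1 * n ≤ llr P1 P2 (histX x n) ∨ llr P1 P2 (histX x n) ≤ β1 * n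
    then n else K * n
  τ_le := by
    intro x
    try dsimp only
    split
    · exact Nat.le_mul_of_pos_left n (by omega)
    · exact le_rfl
  τ_stopping := by
    intro x x' h
    try dsimp only at h ⊢
    by_cases hc : α1 * n ≤ llr P1 P2 (histX x n) ∨ llr P1 P2 (histX x n) ≤ β1 * n
    · rw [if_pos hc] at h ⊢
      rw [h, if_pos hc]
    · rw [if_neg hc] at h ⊢
      have hx : x' = x := by
        have h1 : List.ofFn x' = List.ofFn x := by
          simpa [histX, List.take_of_length_le, List.length_ofFn] using h
        exact List.ofFn_injective h1
      rw [hx, if_neg hc]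
  accept1 := fun l =>
    if l.length ≤ n then decide (α1 * n ≤ llr P1 P2 l)
    else decide (α * (K * n : ℕ) ≤ llr P1 P2 l)

/-- For `γ ≤ D*`, the Phase-I continuation event of the two-phase test
has exponentially small probability with exponent `γ` under both hypotheses: for every
`δ > 0` there is `N(δ)` such that for all `n ≥ N(δ)` and `i = 1,2`,
`P_i( β1 < (1/n)·Σ_{j=1}^n log(P1(X_j)/P2(X_j)) < α1 ) ≤ e^{−(γ−δ)n}`; consequently the
stopping time `τ` of the two-phase test satisfies `P_i(τ > n) ≤ e^{−(γ−δ)n}`.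
Here `λ1, λ2` are the maximizers defining `E1(γ)`, `E2(γ)`, which satisfy
`D(P^(λ1)‖P2) = γ` and `D(P^(λ2)‖P1) = γ`, and `α1 = D(P^(λ2)‖P2) − D(P^(λ2)‖P1)`,
`β1 = D(P^(λ1)‖P2) − D(P^(λ1)‖P1)`. -/
-- auxiliary
def sfun (P1 P2 : X → ℝ) (lam : ℝ) (a : X) : ℝ := P1 a ^ (1 - lam) * P2 a ^ lam

lemma sfun_pos {P1 P2 : X → ℝ} (hs1 : ∀ x, 0 < P1 x) (hs2 : ∀ x, 0 < P2 x) (lam : ℝ) (a : X) :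
    0 < sfun P1 P2 lam a :=
  mul_pos (Real.rpow_pos_of_pos (hs1 a) _) (Real.rpow_pos_of_pos (hs2 a) _)

lemma Zpos {P1 P2 : X → ℝ} [Nonempty X] (hs1 : ∀ x, 0 < P1 x) (hs2 : ∀ x, 0 < P2 x) (lam : ℝ) :
    0 < ∑ a, sfun P1 P2 lam a :=
  Finset.sum_pos (fun a _ => sfun_pos hs1 hs2 lam a) Finset.univ_nonempty

lemma P1_eq {P1 P2 : X → ℝ} (hs1 : ∀ x, 0 < P1 x) (hs2 : ∀ x, 0 < P2 x) (lam : ℝ) (a : X) :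
    P1 a = Real.exp (lam * Real.log (P1 a / P2 a)) * sfun P1 P2 lam a := by
  have hdiv : (0:ℝ) < P1 a / P2 a := div_pos (hs1 a) (hs2 a)
  have h1 : Real.exp (lam * Real.log (P1 a / P2 a)) = (P1 a / P2 a) ^ lam := by
    rw [Real.rpow_def_of_pos hdiv, mul_comm]
  rw [h1, Real.div_rpow (hs1 a).le (hs2 a).le, sfun]
  have h2 : P1 a ^ lam * P1 a ^ (1 - lam) = P1 a := by
    rw [← Real.rpow_add (hs1 a)]; norm_num
  have h3 : P2 a ^ lam ≠ 0 := ne_of_gt (Real.rpow_pos_of_pos (hs2 a) _)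
  field_simp
  exact h2.symm

lemma P2_eq {P1 P2 : X → ℝ} (hs1 : ∀ x, 0 < P1 x) (hs2 : ∀ x, 0 < P2 x) (lam : ℝ) (a : X) :
    P2 a = Real.exp (-(1 - lam) * Real.log (P1 a / P2 a)) * sfun P1 P2 lam a := by
  have hdiv : (0:ℝ) < P1 a / P2 a := div_pos (hs1 a) (hs2 a)
  have h1 : Real.exp (-(1 - lam) * Real.log (P1 a / P2 a)) = (P1 a / P2 a) ^ (-(1 - lam)) := by
    rw [Real.rpow_def_of_pos hdiv, mul_comm]
  rw [h1, Real.div_rpow (hs1 a).le (hs2 a).le, sfun]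
  have h2 : P1 a ^ (-(1-lam)) * P1 a ^ (1 - lam) = 1 := by
    rw [← Real.rpow_add (hs1 a)]; norm_num
  have h3 : P2 a ^ lam / P2 a ^ (-(1-lam)) = P2 a := by
    rw [← Real.rpow_sub (hs2 a)]; norm_num
  have h4 : P2 a ^ (-(1-lam)) ≠ 0 := ne_of_gt (Real.rpow_pos_of_pos (hs2 a) _)
  calc P2 a = (P1 a ^ (-(1-lam)) * P1 a ^ (1 - lam)) * (P2 a ^ lam / P2 a ^ (-(1-lam))) := by
        rw [h2, h3, one_mul]
    _ = P1 a ^ (-(1-lam)) / P2 a ^ (-(1-lam)) * (P1 a ^ (1 - lam) * P2 a ^ lam) := by ring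

lemma sum_tilted {P1 P2 : X → ℝ} [Nonempty X] (hs1 : ∀ x, 0 < P1 x) (hs2 : ∀ x, 0 < P2 x)
    (lam : ℝ) : ∑ x, tilted P1 P2 lam x = 1 := by
  have hZ := Zpos hs1 hs2 lam
  simp only [tilted, ← Finset.sum_div]
  exact div_self (ne_of_gt (by simpa [sfun] using hZ))

lemma log_tilted_P1 {P1 P2 : X → ℝ} [Nonempty X] (hs1 : ∀ x, 0 < P1 x) (hs2 : ∀ x, 0 < P2 x)
    (lam : ℝ) (x : X) :
    Real.log (tilted P1 P2 lam x / P1 x) =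
      -(lam * Real.log (P1 x / P2 x)) - Real.log (∑ a, sfun P1 P2 lam a) := by
  have hZ := Zpos hs1 hs2 lam
  have h : tilted P1 P2 lam x / P1 x =
      Real.exp (-(lam * Real.log (P1 x / P2 x))) / (∑ a, sfun P1 P2 lam a) := by
    have hP := P1_eq hs1 hs2 lam x
    have hP1 : P1 x ≠ 0 := ne_of_gt (hs1 x)
    have hZ' : (∑ a, sfun P1 P2 lam a) ≠ 0 := ne_of_gt hZ
    have hsP : P1 x * Real.exp (-(lam * Real.log (P1 x / P2 x))) = sfun P1 P2 lam x := by
      apply mul_left_cancel₀ (Real.exp_ne_zero (lam * Real.log (P1 x / P2 x)))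
      rw [← hP, mul_comm (P1 x), ← mul_assoc, ← Real.exp_add]
      simp
    rw [show tilted P1 P2 lam x = sfun P1 P2 lam x / ∑ a, sfun P1 P2 lam a from rfl, ← hsP]
    field_simp
  rw [h, Real.log_div (Real.exp_ne_zero _) (ne_of_gt hZ), Real.log_exp]

lemma log_tilted_P2 {P1 P2 : X → ℝ} [Nonempty X] (hs1 : ∀ x, 0 < P1 x) (hs2 : ∀ x, 0 < P2 x)
    (lam : ℝ) (x : X) :
    Real.log (tilted P1 P2 lam x / P2 x) =
      (1 - lam) * Real.log (P1 x / P2 x) - Real.log (∑ a, sfun P1 P2 lam a) := by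
  have hZ := Zpos hs1 hs2 lam
  have h : tilted P1 P2 lam x / P2 x =
      Real.exp ((1 - lam) * Real.log (P1 x / P2 x)) / (∑ a, sfun P1 P2 lam a) := by
    have hP := P2_eq hs1 hs2 lam x
    have hP2 : P2 x ≠ 0 := ne_of_gt (hs2 x)
    have hZ' : (∑ a, sfun P1 P2 lam a) ≠ 0 := ne_of_gt hZ
    have hsP : P2 x * Real.exp ((1 - lam) * Real.log (P1 x / P2 x)) = sfun P1 P2 lam x := by
      apply mul_left_cancel₀ (Real.exp_ne_zero (-(1 - lam) * Real.log (P1 x / P2 x)))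
      rw [← hP, mul_comm (P2 x), ← mul_assoc, ← Real.exp_add]
      rw [neg_mul, neg_add_cancel, Real.exp_zero, one_mul]
    rw [show tilted P1 P2 lam x = sfun P1 P2 lam x / ∑ a, sfun P1 P2 lam a from rfl, ← hsP]
    field_simp
  rw [h, Real.log_div (Real.exp_ne_zero _) (ne_of_gt hZ), Real.log_exp]

lemma klDiv_tilted_P1 {P1 P2 : X → ℝ} [Nonempty X] (hs1 : ∀ x, 0 < P1 x) (hs2 : ∀ x, 0 < P2 x)
    (lam : ℝ) :
    klDiv (tilted P1 P2 lam) P1 =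
      -(lam * ∑ x, tilted P1 P2 lam x * Real.log (P1 x / P2 x))
        - Real.log (∑ a, sfun P1 P2 lam a) := by
  rw [klDiv]
  have : ∀ x ∈ Finset.univ, tilted P1 P2 lam x * Real.log (tilted P1 P2 lam x / P1 x)
      = -(lam * (tilted P1 P2 lam x * Real.log (P1 x / P2 x)))
        - Real.log (∑ a, sfun P1 P2 lam a) * tilted P1 P2 lam x := by
    intro x _
    rw [log_tilted_P1 hs1 hs2]
    ring
  rw [Finset.sum_congr rfl this, Finset.sum_sub_distrib, Finset.sum_neg_distrib,
    ← Finset.mul_sum, ← Finset.mul_sum, sum_tilted hs1 hs2, mul_one]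

lemma klDiv_tilted_P2 {P1 P2 : X → ℝ} [Nonempty X] (hs1 : ∀ x, 0 < P1 x) (hs2 : ∀ x, 0 < P2 x)
    (lam : ℝ) :
    klDiv (tilted P1 P2 lam) P2 =
      (1 - lam) * (∑ x, tilted P1 P2 lam x * Real.log (P1 x / P2 x))
        - Real.log (∑ a, sfun P1 P2 lam a) := by
  rw [klDiv]
  have : ∀ x ∈ Finset.univ, tilted P1 P2 lam x * Real.log (tilted P1 P2 lam x / P2 x)
      = (1 - lam) * (tilted P1 P2 lam x * Real.log (P1 x / P2 x))
        - Real.log (∑ a, sfun P1 P2 lam a) * tilted P1 P2 lam x := by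
    intro x _
    rw [log_tilted_P2 hs1 hs2]
    ring
  rw [Finset.sum_congr rfl this, Finset.sum_sub_distrib, ← Finset.mul_sum, ← Finset.mul_sum,
    sum_tilted hs1 hs2, mul_one]

lemma filter_lt_eq {N n : ℕ} (hn : n ≤ N) :
    Finset.univ.filter (fun i : Fin N => (i:ℕ) < n) =
      Finset.map (Fin.castLEEmb hn) Finset.univ := by
  ext i
  simp only [Finset.mem_filter, Finset.mem_univ, true_and, Finset.mem_map]
  constructor
  · intro hi
    refine ⟨⟨(i:ℕ), hi⟩, ?_⟩
    ext
    simp [Fin.castLEEmb, Fin.castLE]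
  · rintro ⟨j, rfl⟩
    simpa [Fin.castLEEmb, Fin.castLE] using j.2

lemma filter_lt_card {N n : ℕ} (hn : n ≤ N) :
    (Finset.univ.filter fun i : Fin N => (i:ℕ) < n).card = n := by
  rw [filter_lt_eq hn, Finset.card_map, Finset.card_univ, Fintype.card_fin]

lemma llr_take (P1 P2 : X → ℝ) {N : ℕ} (x : Fin N → X) (n : ℕ) :
    llr P1 P2 ((List.ofFn x).take n) =
      ∑ i ∈ Finset.univ.filter (fun i : Fin N => (i:ℕ) < n),
        Real.log (P1 (x i) / P2 (x i)) := by
  rw [llr, List.map_take, List.map_ofFn, List.sum_take_ofFn]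
  rfl

/-- The key Chernoff-type bound for an event determined by the first `n` samples. -/
lemma event_bound (P1 P2 P : X → ℝ) (hP0 : ∀ a, 0 ≤ P a) (hPs : ∑ a, P a = 1)
    (h1 : ∀ a, 0 ≤ P1 a) (h2 : ∀ a, 0 ≤ P2 a)
    (lam c u : ℝ)
    (hform : ∀ a, P a = Real.exp (c * Real.log (P1 a / P2 a)) * sfun P1 P2 lam a)
    {N n : ℕ} (hn : n ≤ N) (E : (Fin N → X) → Prop) [DecidablePred E]
    (hev : ∀ x, E x → c * llr P1 P2 ((List.ofFn x).take n) ≤ u) :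
    ∑ x : Fin N → X, prodProb P x * (if E x then 1 else 0)
      ≤ Real.exp u * (∑ a, sfun P1 P2 lam a) ^ n := by
  have hs0 : ∀ a, 0 ≤ sfun P1 P2 lam a := fun a =>
    mul_nonneg (Real.rpow_nonneg (h1 a) _) (Real.rpow_nonneg (h2 a) _)
  set S : Finset (Fin N) := Finset.univ.filter (fun i : Fin N => (i:ℕ) < n) with hS
  -- step 1 : termwise bound
  have step1 : ∀ x : Fin N → X, prodProb P x * (if E x then 1 else 0)
      ≤ Real.exp u * ∏ i : Fin N, (if (i:ℕ) < n then sfun P1 P2 lam (x i) else P (x i)) := by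
    intro x
    have hrhs0 : 0 ≤ Real.exp u * ∏ i : Fin N, (if (i:ℕ) < n then sfun P1 P2 lam (x i) else P (x i)) := by
      apply mul_nonneg (Real.exp_nonneg u)
      apply Finset.prod_nonneg
      intro i _
      by_cases h : (i:ℕ) < n <;> simp [h, hs0, hP0]
    by_cases hE : E x
    · rw [if_pos hE, mul_one]
      have hsplit : prodProb P x = (∏ i ∈ S, P (x i)) *
          ∏ i ∈ Finset.univ.filter (fun i : Fin N => ¬ (i:ℕ) < n), P (x i) :=
        (Finset.prod_filter_mul_prod_filter_not Finset.univ
          (fun i : Fin N => (i:ℕ) < n) (fun i => P (x i))).symm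
      have hsplit2 : ∏ i : Fin N, (if (i:ℕ) < n then sfun P1 P2 lam (x i) else P (x i)) =
          (∏ i ∈ S, sfun P1 P2 lam (x i)) *
          ∏ i ∈ Finset.univ.filter (fun i : Fin N => ¬ (i:ℕ) < n), P (x i) :=
        Finset.prod_ite _ _
      have hfirst : ∏ i ∈ S, P (x i) ≤ Real.exp u * ∏ i ∈ S, sfun P1 P2 lam (x i) := by
        have hform2 : ∏ i ∈ S, P (x i) =
            Real.exp (c * llr P1 P2 ((List.ofFn x).take n)) * ∏ i ∈ S, sfun P1 P2 lam (x i) := by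
          calc ∏ i ∈ S, P (x i)
              = ∏ i ∈ S, (Real.exp (c * Real.log (P1 (x i) / P2 (x i))) * sfun P1 P2 lam (x i)) :=
                Finset.prod_congr rfl (fun i _ => hform (x i))
            _ = (∏ i ∈ S, Real.exp (c * Real.log (P1 (x i) / P2 (x i)))) *
                ∏ i ∈ S, sfun P1 P2 lam (x i) := Finset.prod_mul_distrib
            _ = Real.exp (∑ i ∈ S, c * Real.log (P1 (x i) / P2 (x i))) *
                ∏ i ∈ S, sfun P1 P2 lam (x i) := by rw [Real.exp_sum]
            _ = Real.exp (c * llr P1 P2 ((List.ofFn x).take n)) *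
                ∏ i ∈ S, sfun P1 P2 lam (x i) := by
                  rw [llr_take, ← Finset.mul_sum]
        rw [hform2]
        exact mul_le_mul_of_nonneg_right (Real.exp_le_exp.2 (hev x hE))
          (Finset.prod_nonneg (fun i _ => hs0 (x i)))
      calc prodProb P x = (∏ i ∈ S, P (x i)) *
            ∏ i ∈ Finset.univ.filter (fun i : Fin N => ¬ (i:ℕ) < n), P (x i) := hsplit
        _ ≤ (Real.exp u * ∏ i ∈ S, sfun P1 P2 lam (x i)) *
            ∏ i ∈ Finset.univ.filter (fun i : Fin N => ¬ (i:ℕ) < n), P (x i) :=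
            mul_le_mul_of_nonneg_right hfirst
              (Finset.prod_nonneg (fun i _ => hP0 (x i)))
        _ = Real.exp u * ∏ i : Fin N, (if (i:ℕ) < n then sfun P1 P2 lam (x i) else P (x i)) := by
            rw [hsplit2]; ring
    · rw [if_neg hE, mul_zero]
      exact hrhs0
  -- step 2 : sum the bound
  calc ∑ x : Fin N → X, prodProb P x * (if E x then 1 else 0)
      ≤ ∑ x : Fin N → X, Real.exp u *
          ∏ i : Fin N, (if (i:ℕ) < n then sfun P1 P2 lam (x i) else P (x i)) :=
        Finset.sum_le_sum (fun x _ => step1 x)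
    _ = Real.exp u * ∑ x : Fin N → X,
          ∏ i : Fin N, (if (i:ℕ) < n then sfun P1 P2 lam (x i) else P (x i)) := by
        rw [Finset.mul_sum]
    _ = Real.exp u * ∏ i : Fin N,
          ∑ a : X, (if (i:ℕ) < n then sfun P1 P2 lam a else P a) := by
        rw [Finset.prod_univ_sum, Fintype.piFinset_univ]
    _ = Real.exp u * (∑ a, sfun P1 P2 lam a) ^ n := by
        congr 1
        have : ∀ i : Fin N, (∑ a : X, (if (i:ℕ) < n then sfun P1 P2 lam a else P a))
            = (if (i:ℕ) < n then (∑ a, sfun P1 P2 lam a) else 1) := by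
          intro i
          by_cases h : (i:ℕ) < n <;> simp [h, hPs]
        rw [Finset.prod_congr rfl (fun i _ => this i), Finset.prod_ite,
          Finset.prod_const, Finset.prod_const, one_pow, mul_one, filter_lt_card hn]


theorem two_phase_test_phase_one_exponent
    {X : Type} [Fintype X]
    (P1 P2 : X → ℝ) (h1 : IsPMF P1) (h2 : IsPMF P2) (hne : P1 ≠ P2)
    (hs1 : ∀ x, 0 < P1 x) (hs2 : ∀ x, 0 < P2 x)
    (lamstar : ℝ) (hlamstar : lamstar ∈ Set.Icc (0:ℝ) 1)
    (hstar : klDiv (tilted P1 P2 lamstar) P1 = klDiv (tilted P1 P2 lamstar) P2)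
    (γ : ℝ) (hγ0 : 0 ≤ γ) (hγ : γ ≤ klDiv (tilted P1 P2 lamstar) P1)
    (lam1 : ℝ) (hlam1 : lam1 ∈ Set.Icc (0:ℝ) 1)
    (hlam1feas : klDiv (tilted P1 P2 lam1) P2 = γ)
    (hlam1max : klDiv (tilted P1 P2 lam1) P1 = E1exp P1 P2 γ)
    (lam2 : ℝ) (hlam2 : lam2 ∈ Set.Icc (0:ℝ) 1)
    (hlam2feas : klDiv (tilted P1 P2 lam2) P1 = γ)
    (hlam2max : klDiv (tilted P1 P2 lam2) P2 = E2exp P1 P2 γ)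
    (K : ℕ) (hK : 1 ≤ K) (α : ℝ)
    (α1 β1 : ℝ)
    (hα1 : α1 = klDiv (tilted P1 P2 lam2) P2 - klDiv (tilted P1 P2 lam2) P1)
    (hβ1 : β1 = klDiv (tilted P1 P2 lam1) P2 - klDiv (tilted P1 P2 lam1) P1) :
    ∀ δ > 0, ∃ N : ℕ, ∀ n : ℕ, n ≥ N →
      (∀ P : X → ℝ, (P = P1 ∨ P = P2) →
        (∑ x : Fin n → X, prodProb P x *
            (if β1 * n < llr P1 P2 (List.ofFn x) ∧ llr P1 P2 (List.ofFn x) < α1 * n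
             then 1 else 0))
          ≤ Real.exp (-((γ - δ) * n))) ∧
      (∀ P : X → ℝ, (P = P1 ∨ P = P2) →
        lateProbHT P (twoPhaseTest P1 P2 α1 β1 α K n hK) n
          ≤ Real.exp (-((γ - δ) * n))) := by
  intro δ hδ
  refine ⟨0, fun n _ => ?_⟩
  have hne' : Nonempty X := by
    by_contra h
    rw [not_nonempty_iff] at h
    have h10 := h1.2
    rw [Finset.univ_eq_empty, Finset.sum_empty] at h10
    exact one_ne_zero h10.symm
  have h1nn : ∀ a, 0 ≤ P1 a := h1.1
  have h2nn : ∀ a, 0 ≤ P2 a := h2.1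
  have hZ1 : 0 < ∑ a, sfun P1 P2 lam1 a := Zpos hs1 hs2 lam1
  have hZ2 : 0 < ∑ a, sfun P1 P2 lam2 a := Zpos hs1 hs2 lam2
  have hA := klDiv_tilted_P1 hs1 hs2 lam2
  have hB := klDiv_tilted_P2 hs1 hs2 lam2
  have hC := klDiv_tilted_P2 hs1 hs2 lam1
  have hD := klDiv_tilted_P1 hs1 hs2 lam1
  have hα1m : α1 = ∑ x, tilted P1 P2 lam2 x * Real.log (P1 x / P2 x) := by
    rw [hα1, hB, hA]; ring
  have hβ1m : β1 = ∑ x, tilted P1 P2 lam1 x * Real.log (P1 x / P2 x) := by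
    rw [hβ1, hC, hD]; ring
  have hfeas2 : -(lam2 * ∑ x, tilted P1 P2 lam2 x * Real.log (P1 x / P2 x))
      - Real.log (∑ a, sfun P1 P2 lam2 a) = γ := by rw [← hA]; exact hlam2feas
  have hfeas1 : (1 - lam1) * (∑ x, tilted P1 P2 lam1 x * Real.log (P1 x / P2 x))
      - Real.log (∑ a, sfun P1 P2 lam1 a) = γ := by rw [← hC]; exact hlam1feas
  have key2 : lam2 * α1 + Real.log (∑ a, sfun P1 P2 lam2 a) = -γ := by
    rw [hα1m]; linarith
  have key1 : -(1 - lam1) * β1 + Real.log (∑ a, sfun P1 P2 lam1 a) = -γ := by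
    rw [hβ1m]; linarith
  -- the common exponent computation
  have expcalc : ∀ (Z cc tt : ℝ), 0 < Z → cc * tt + Real.log Z = -γ →
      Real.exp (cc * (tt * n)) * Z ^ n ≤ Real.exp (-((γ - δ) * n)) := by
    intro Z cc tt hZ hkey
    rw [← Real.exp_log hZ, ← Real.exp_nat_mul, ← Real.exp_add]
    apply Real.exp_le_exp.2
    have h0 : cc * (tt * n) + (n : ℝ) * Real.log Z = (cc * tt + Real.log Z) * n := by ring
    rw [h0, hkey]
    have hn0 : (0:ℝ) ≤ (n : ℝ) := Nat.cast_nonneg n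
    have h2' : -((γ - δ) * n) = -γ * n + δ * n := by ring
    have h3' : 0 ≤ δ * n := mul_nonneg hδ.le hn0
    linarith
  constructor
  · -- Phase-I event probability bound
    intro P hP
    rcases hP with h | h <;> rw [h]
    · have hev : ∀ x : Fin n → X,
          (β1 * n < llr P1 P2 (List.ofFn x) ∧ llr P1 P2 (List.ofFn x) < α1 * n) →
          lam2 * llr P1 P2 ((List.ofFn x).take n) ≤ lam2 * (α1 * n) := by
        intro x hx
        have ht : (List.ofFn x).take n = List.ofFn x := List.take_of_length_le (by simp)
        rw [ht]
        exact mul_le_mul_of_nonneg_left hx.2.le hlam2.1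
      exact le_trans
        (event_bound P1 P2 P1 h1nn h1.2 h1nn h2nn lam2 lam2 (lam2 * (α1 * n))
          (P1_eq hs1 hs2 lam2) (le_refl n) _ hev)
        (expcalc _ lam2 α1 hZ2 key2)
    · have hev : ∀ x : Fin n → X,
          (β1 * n < llr P1 P2 (List.ofFn x) ∧ llr P1 P2 (List.ofFn x) < α1 * n) →
          -(1 - lam1) * llr P1 P2 ((List.ofFn x).take n) ≤ -(1 - lam1) * (β1 * n) := by
        intro x hx
        have ht : (List.ofFn x).take n = List.ofFn x := List.take_of_length_le (by simp)
        rw [ht]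
        exact mul_le_mul_of_nonpos_left hx.1.le (by linarith [hlam1.2])
      exact le_trans
        (event_bound P1 P2 P2 h2nn h2.2 h1nn h2nn lam1 (-(1 - lam1)) (-(1 - lam1) * (β1 * n))
          (P2_eq hs1 hs2 lam1) (le_refl n) _ hev)
        (expcalc _ (-(1 - lam1)) β1 hZ1 key1)
  · -- late-stopping probability bound
    have hn' : n ≤ K * n := Nat.le_mul_of_pos_left n (by omega)
    intro P hP
    rcases hP with h | h <;> rw [h]
    · have hstep : lateProbHT P1 (twoPhaseTest P1 P2 α1 β1 α K n hK) n ≤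
          ∑ x : Fin (K * n) → X, prodProb P1 x *
            (if β1 * n < llr P1 P2 ((List.ofFn x).take n) ∧
                llr P1 P2 ((List.ofFn x).take n) < α1 * n then 1 else 0) := by
        rw [lateProbHT]
        apply Finset.sum_le_sum
        intro x _
        apply mul_le_mul_of_nonneg_left _ (Finset.prod_nonneg fun i _ => h1nn (x i))
        have hτ : (twoPhaseTest P1 P2 α1 β1 α K n hK).τ x =
            if α1 * n ≤ llr P1 P2 (histX x n) ∨ llr P1 P2 (histX x n) ≤ β1 * n
            then n else K * n := rfl
        by_cases hc : α1 * n ≤ llr P1 P2 (histX x n) ∨ llr P1 P2 (histX x n) ≤ β1 * n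
        · rw [hτ, if_pos hc]
          simp only [lt_self_iff_false, if_false]
          split <;> norm_num
        · push_neg at hc
          have hE : β1 * n < llr P1 P2 ((List.ofFn x).take n) ∧
              llr P1 P2 ((List.ofFn x).take n) < α1 * n := ⟨hc.2, hc.1⟩
          rw [if_pos hE]
          split <;> norm_num
      have hev : ∀ x : Fin (K * n) → X,
          (β1 * n < llr P1 P2 ((List.ofFn x).take n) ∧
            llr P1 P2 ((List.ofFn x).take n) < α1 * n) →
          lam2 * llr P1 P2 ((List.ofFn x).take n) ≤ lam2 * (α1 * n) :=
        fun x hx => mul_le_mul_of_nonneg_left hx.2.le hlam2.1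
      exact le_trans hstep (le_trans
        (event_bound P1 P2 P1 h1nn h1.2 h1nn h2nn lam2 lam2 (lam2 * (α1 * n))
          (P1_eq hs1 hs2 lam2) hn' _ hev)
        (expcalc _ lam2 α1 hZ2 key2))
    · have hstep : lateProbHT P2 (twoPhaseTest P1 P2 α1 β1 α K n hK) n ≤
          ∑ x : Fin (K * n) → X, prodProb P2 x *
            (if β1 * n < llr P1 P2 ((List.ofFn x).take n) ∧
                llr P1 P2 ((List.ofFn x).take n) < α1 * n then 1 else 0) := by
        rw [lateProbHT]
        apply Finset.sum_le_sum
        intro x _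
        apply mul_le_mul_of_nonneg_left _ (Finset.prod_nonneg fun i _ => h2nn (x i))
        have hτ : (twoPhaseTest P1 P2 α1 β1 α K n hK).τ x =
            if α1 * n ≤ llr P1 P2 (histX x n) ∨ llr P1 P2 (histX x n) ≤ β1 * n
            then n else K * n := rfl
        by_cases hc : α1 * n ≤ llr P1 P2 (histX x n) ∨ llr P1 P2 (histX x n) ≤ β1 * n
        · rw [hτ, if_pos hc]
          simp only [lt_self_iff_false, if_false]
          split <;> norm_num
        · push_neg at hc
          have hE : β1 * n < llr P1 P2 ((List.ofFn x).take n) ∧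
              llr P1 P2 ((List.ofFn x).take n) < α1 * n := ⟨hc.2, hc.1⟩
          rw [if_pos hE]
          split <;> norm_num
      have hev : ∀ x : Fin (K * n) → X,
          (β1 * n < llr P1 P2 ((List.ofFn x).take n) ∧
            llr P1 P2 ((List.ofFn x).take n) < α1 * n) →
          -(1 - lam1) * llr P1 P2 ((List.ofFn x).take n) ≤ -(1 - lam1) * (β1 * n) :=
        fun x hx => mul_le_mul_of_nonpos_left hx.1.le (by linarith [hlam1.2])
      exact le_trans hstep (le_trans
        (event_bound P1 P2 P2 h2nn h2.2 h1nn h2nn lam1 (-(1 - lam1)) (-(1 - lam1) * (β1 * n))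
          (P2_eq hs1 hs2 lam1) hn' _ hev)
        (expcalc _ (-(1 - lam1)) β1 hZ1 key1))

end
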